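/- Let X be an infinite-dimensional complex Banach space, T a bounded linear operator on X, and Γ ⊆ ℂ a nonempty set that is bounded and bounded away from 0 (there exist 0 < a ≤ b with a ≤ |γ| ≤ b for all γ ∈ Γ). If x is Γ-supercyclic for T, then p(T)x is Γ-supercyclic for T for every nonzero polynomial p ∈ ℂ[X]. -/

import Mathlib

open Set Polynomial


lemma exists_functional_vanishing {X : Type*} [NormedAddCommGroup X] [NormedSpace ℂ X]
    (S : Submodule ℂ X) (hS : ¬ Dense (S : Set X)) :
    ∃ φ : X →L[ℂ] ℂ, φ ≠ 0 ∧ ∀ y ∈ S, φ y = 0 := by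
  obtain ⟨z, hz⟩ : ∃ z, z ∉ closure (S : Set X) := by
    by_contra h; push_neg at h; exact hS h
  have hconv : Convex ℝ (closure (S : Set X)) :=
    ((S.restrictScalars ℝ).convex).closure
  obtain ⟨f, u, hfu, huf⟩ := geometric_hahn_banach_closed_point hconv isClosed_closure hz
  have hu0 : 0 < u := by
    have h0 : (0 : X) ∈ closure (S : Set X) := subset_closure S.zero_mem
    have := hfu 0 h0; simpa using this
  have hvanish : ∀ y ∈ closure (S : Set X), f y = 0 := by
    intro y hy
    by_contra hfy
    have hsm : ((u + 1) / f y) • y ∈ closure (S : Set X) :=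
      (S.topologicalClosure.restrictScalars ℝ).smul_mem ((u + 1) / f y)
        (show y ∈ S.topologicalClosure.restrictScalars ℝ from hy)
    have := hfu _ hsm
    rw [map_smul] at this
    simp only [smul_eq_mul] at this
    rw [div_mul_cancel₀ _ hfy] at this
    linarith
  refine ⟨StrongDual.extendRCLike f, ?_, ?_⟩
  · intro h
    have hre : Complex.re (StrongDual.extendRCLike f z) = f z := by
      rw [StrongDual.extendRCLike_apply]
      simp
    rw [h] at hre
    simp at hre
    linarith
  · intro y hy
    rw [StrongDual.extendRCLike_apply]
    have h1 : f y = 0 := hvanish y (subset_closure hy)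
    have h2 : f ((RCLike.I : ℂ) • y) = 0 := hvanish _ (subset_closure (S.smul_mem _ hy))
    rw [h1, h2]; simp

lemma dense_image_surj {X : Type*} [NormedAddCommGroup X] [NormedSpace ℂ X]
    (φ : X →L[ℂ] ℂ) (hφ : φ ≠ 0) {s : Set X} (hs : Dense s) : Dense (φ '' s) := by
  obtain ⟨w, hw⟩ : ∃ w, φ w ≠ 0 := by
    by_contra h; push_neg at h; exact hφ (ContinuousLinearMap.ext fun v => by simp [h v])
  have hsurj : Function.Surjective φ := fun c =>
    ⟨(c / φ w) • w, by rw [map_smul, smul_eq_mul]; field_simp⟩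
  exact (hsurj.denseRange).dense_image φ.continuous hs


lemma sub_smul_denseRange {X : Type*} [NormedAddCommGroup X] [NormedSpace ℂ X]
    (T : X →L[ℂ] X) (Γ : Set ℂ)
    (hΓ : ∃ a b : ℝ, 0 < a ∧ a ≤ b ∧ ∀ γ ∈ Γ, a ≤ ‖γ‖ ∧ ‖γ‖ ≤ b)
    (x : X) (hx : Dense {y : X | ∃ γ ∈ Γ, ∃ n : ℕ, y = γ • (T ^ n) x}) (lam : ℂ) :
    DenseRange (T - lam • (1 : X →L[ℂ] X)) := by
  by_contra hd
  set A : X →L[ℂ] X := T - lam • (1 : X →L[ℂ] X) with hA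
  have hrange : ((LinearMap.range (A : X →ₗ[ℂ] X) : Submodule ℂ X) : Set X) = Set.range A := by
    ext v; simp [LinearMap.mem_range]
  have hnd : ¬ Dense ((LinearMap.range (A : X →ₗ[ℂ] X) : Submodule ℂ X) : Set X) := by
    rw [hrange]; exact hd
  obtain ⟨φ, hφ0, hφ⟩ := exists_functional_vanishing (LinearMap.range (A : X →ₗ[ℂ] X)) hnd
  have heig : ∀ v, φ (T v) = lam * φ v := by
    intro v
    have := hφ (A v) (LinearMap.mem_range.2 ⟨v, rfl⟩)
    have hAv : A v = T v - lam • v := by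
      simp [hA, ContinuousLinearMap.sub_apply]
    rw [hAv, map_sub, map_smul, sub_eq_zero] at this
    simpa [smul_eq_mul] using this
  have horb : ∀ n : ℕ, φ ((T ^ n) x) = lam ^ n * φ x := by
    intro n
    induction n with
    | zero => simp
    | succ n ih =>
      have : (T ^ (n + 1)) x = T ((T ^ n) x) := by
        rw [pow_succ']; rfl
      rw [this, heig, ih, pow_succ]; ring
  obtain ⟨a, b, ha, hab, hbd⟩ := hΓ
  have hdense := dense_image_surj φ hφ0 hx
  -- elements of the image
  have hmem : ∀ z ∈ φ '' {y : X | ∃ γ ∈ Γ, ∃ n : ℕ, y = γ • (T ^ n) x},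
      ∃ γ ∈ Γ, ∃ n : ℕ, z = γ * lam ^ n * φ x := by
    rintro z ⟨y, ⟨γ, hγ, n, rfl⟩, rfl⟩
    exact ⟨γ, hγ, n, by rw [map_smul, horb, smul_eq_mul]; ring⟩
  rcases eq_or_lt_of_le (norm_nonneg (φ x)) with hc0 | hc0
  · -- φ x = 0 : all image elements are 0, but image is dense
    have h1 : (1 : ℂ) ∈ closure (φ '' {y : X | ∃ γ ∈ Γ, ∃ n : ℕ, y = γ • (T ^ n) x}) :=
      hdense 1
    rw [Metric.mem_closure_iff] at h1
    obtain ⟨z, hz, hdist⟩ := h1 (1/2) (by norm_num)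
    obtain ⟨γ, _, n, rfl⟩ := hmem z hz
    have : φ x = 0 := norm_eq_zero.mp hc0.symm
    rw [this, mul_zero] at hdist
    simp [Complex.dist_eq] at hdist
    norm_num at hdist
  · rcases le_or_gt ‖lam‖ 1 with hl | hl
    · -- all norms ≤ b * ‖φ x‖ ; point b*c+2 cannot be approximated
      have h1 := hdense (((b * ‖φ x‖ + 2 : ℝ) : ℂ))
      rw [Metric.mem_closure_iff] at h1
      obtain ⟨z, hz, hdist⟩ := h1 1 one_pos
      obtain ⟨γ, hγ, n, rfl⟩ := hmem z hz
      have hnz : ‖γ * lam ^ n * φ x‖ ≤ b * ‖φ x‖ := by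
        rw [norm_mul, norm_mul, norm_pow]
        have h2 : ‖γ‖ ≤ b := (hbd γ hγ).2
        have h3 : ‖lam‖ ^ n ≤ 1 := pow_le_one₀ (norm_nonneg _) hl
        calc ‖γ‖ * ‖lam‖ ^ n * ‖φ x‖ ≤ b * 1 * ‖φ x‖ := by
              apply mul_le_mul (mul_le_mul h2 h3 (by positivity) (le_trans ha.le ((hbd γ hγ).1.trans h2))) le_rfl (norm_nonneg _)
              linarith
          _ = b * ‖φ x‖ := by ring
      have hbc : 0 ≤ b * ‖φ x‖ := mul_nonneg (by linarith) (norm_nonneg _)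
      have : (b * ‖φ x‖ + 2 : ℝ) - (b * ‖φ x‖) ≤ dist (((b * ‖φ x‖ + 2 : ℝ)) : ℂ) (γ * lam ^ n * φ x) := by
        have := norm_sub_norm_le (((b * ‖φ x‖ + 2 : ℝ)) : ℂ) (γ * lam ^ n * φ x)
        rw [← dist_eq_norm] at this
        have hn : ‖(((b * ‖φ x‖ + 2 : ℝ)) : ℂ)‖ = b * ‖φ x‖ + 2 := by
          rw [Complex.norm_real, Real.norm_of_nonneg (by linarith)]
        linarith [hnz]
      linarith
    · -- ‖lam‖ > 1 : all norms ≥ a * ‖φ x‖ ; point 0 cannot be approximated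
      have h1 := hdense 0
      rw [Metric.mem_closure_iff] at h1
      obtain ⟨z, hz, hdist⟩ := h1 (a * ‖φ x‖) (by positivity)
      obtain ⟨γ, hγ, n, rfl⟩ := hmem z hz
      have hnz : a * ‖φ x‖ ≤ ‖γ * lam ^ n * φ x‖ := by
        rw [norm_mul, norm_mul, norm_pow]
        have h2 : a ≤ ‖γ‖ := (hbd γ hγ).1
        have h3 : (1:ℝ) ≤ ‖lam‖ ^ n := one_le_pow₀ hl.le
        calc a * ‖φ x‖ = a * 1 * ‖φ x‖ := by ring
          _ ≤ ‖γ‖ * ‖lam‖ ^ n * ‖φ x‖ := by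
              apply mul_le_mul (mul_le_mul h2 h3 one_pos.le (le_trans ha.le h2)) le_rfl (by positivity) (by positivity)
      rw [dist_comm, dist_zero_right] at hdist
      linarith

lemma aeval_denseRange {X : Type*} [NormedAddCommGroup X] [NormedSpace ℂ X]
    (T : X →L[ℂ] X) (Γ : Set ℂ)
    (hΓ : ∃ a b : ℝ, 0 < a ∧ a ≤ b ∧ ∀ γ ∈ Γ, a ≤ ‖γ‖ ∧ ‖γ‖ ≤ b)
    (x : X) (hx : Dense {y : X | ∃ γ ∈ Γ, ∃ n : ℕ, y = γ • (T ^ n) x})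
    (p : Polynomial ℂ) (hp : p ≠ 0) : DenseRange (Polynomial.aeval T p) := by
  have key : ∀ n (p : Polynomial ℂ), p ≠ 0 → p.natDegree = n →
      DenseRange (Polynomial.aeval T p) := by
    intro n
    induction n using Nat.strong_induction_on with
    | _ n ih =>
      intro p hp hdeg
      rcases eq_or_ne n 0 with h0 | h0
      · have hpc : p = C (p.coeff 0) := eq_C_of_natDegree_eq_zero (hdeg.trans h0)
        have hc : p.coeff 0 ≠ 0 := fun h => hp (by rw [hpc, h, map_zero])
        rw [hpc, aeval_C]
        have hfun : ∀ v : X, (algebraMap ℂ (X →L[ℂ] X) (p.coeff 0)) v = p.coeff 0 • v := by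
          intro v
          rw [Algebra.algebraMap_eq_smul_one, ContinuousLinearMap.smul_apply,
            ContinuousLinearMap.one_apply]
        have hsurj : Function.Surjective (algebraMap ℂ (X →L[ℂ] X) (p.coeff 0)) := by
          intro v
          refine ⟨(p.coeff 0)⁻¹ • v, ?_⟩
          rw [hfun, smul_smul, mul_inv_cancel₀ hc, one_smul]
        exact hsurj.denseRange
      · have hdpos : 0 < p.degree := natDegree_pos_iff_degree_pos.mp
          (by rw [hdeg]; exact Nat.pos_of_ne_zero h0)
        obtain ⟨z, hz⟩ := Complex.exists_root hdpos
        obtain ⟨q, hq⟩ := (dvd_iff_isRoot.mpr hz)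
        have hXz : (Polynomial.X - C z : Polynomial ℂ) ≠ 0 := X_sub_C_ne_zero z
        have hq0 : q ≠ 0 := fun h => hp (by rw [hq, h, mul_zero])
        have hqd : q.natDegree < n := by
          have := natDegree_mul hXz hq0
          rw [← hq, natDegree_X_sub_C, hdeg] at this
          omega
        have hqdr : DenseRange (Polynomial.aeval T q) := ih _ hqd q hq0 rfl
        have hfactor : Polynomial.aeval T p =
            (T - z • (1 : X →L[ℂ] X)) * Polynomial.aeval T q := by
          rw [hq, map_mul]
          congr 1
          rw [map_sub, aeval_X, aeval_C, Algebra.algebraMap_eq_smul_one]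
        rw [hfactor]
        have hcoe : ⇑((T - z • (1 : X →L[ℂ] X)) * Polynomial.aeval T q) =
            ⇑(T - z • (1 : X →L[ℂ] X)) ∘ ⇑(Polynomial.aeval T q) := rfl
        rw [hcoe]
        exact (sub_smul_denseRange T Γ hΓ x hx z).comp hqdr
          (T - z • (1 : X →L[ℂ] X)).continuous
  exact key p.natDegree p hp rfl

/-- **Lemma 3.6.** If `x` is `Γ`-supercyclic for `T` with `Γ` nonempty, bounded and bounded
away from `0`, then `p(T)x` is `Γ`-supercyclic for `T` for every nonzero polynomial `p`. -/
theorem gamma_supercyclic_polynomial_image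
    (X : Type*) [NormedAddCommGroup X] [NormedSpace ℂ X] [CompleteSpace X]
    (hX : ¬FiniteDimensional ℂ X) (T : X →L[ℂ] X) (Γ : Set ℂ)
    (hne : Γ.Nonempty)
    (hΓ : ∃ a b : ℝ, 0 < a ∧ a ≤ b ∧ ∀ γ ∈ Γ, a ≤ ‖γ‖ ∧ ‖γ‖ ≤ b)
    (x : X) (hx : Dense {y : X | ∃ γ ∈ Γ, ∃ n : ℕ, y = γ • (T ^ n) x}) :
    ∀ p : Polynomial ℂ, p ≠ 0 →
      Dense {y : X | ∃ γ ∈ Γ, ∃ n : ℕ, y = γ • (T ^ n) ((Polynomial.aeval T p) x)} := by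
  intro p hp
  set P : X →L[ℂ] X := Polynomial.aeval T p with hP
  have hPd : DenseRange P := aeval_denseRange T Γ hΓ x hx p hp
  have himg : Dense (P '' {y : X | ∃ γ ∈ Γ, ∃ n : ℕ, y = γ • (T ^ n) x}) :=
    hPd.dense_image P.continuous hx
  refine himg.mono ?_
  rintro _ ⟨_, ⟨γ, hγ, n, rfl⟩, rfl⟩
  refine ⟨γ, hγ, n, ?_⟩
  rw [map_smul]
  congr 1
  have hcomm : P * T ^ n = T ^ n * P := by
    have hTn : (T ^ n : X →L[ℂ] X) = Polynomial.aeval T (Polynomial.X ^ n : Polynomial ℂ) := by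
      rw [map_pow, aeval_X]
    rw [hP, hTn, ← map_mul, ← map_mul, mul_comm]
  calc P ((T ^ n) x) = (P * T ^ n) x := rfl
    _ = (T ^ n * P) x := by rw [hcomm]
    _ = (T ^ n) (P x) := rfl
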